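/- Let f : Λ → ℝ (Λ the unit torus) satisfy the pointwise bounds |f(x)| ≤ C min(N, (log N)³ N^{κ/4}/|x|^{5/2}) and, for every m ≥ 2, |f(x)| ≤ C_m N (ℓ_σ/|x|)^m with ℓ_σ = N^{−κ/2+β/4}, and suppose ‖f‖₂ ≤ C N^{3κ/4}. Let ℓ_B = N^{−κ/2+β/12}, Λ_B = Λ ∩ ℓ_B ℤ³, and f_u = f·1_{B_u} where B_u is the Voronoi cell of u ∈ Λ_B. Then for every ε > 0 there is C_ε with Σ_{u ∈ Λ_B} ‖f_u‖₂ ≤ C_ε N^{3κ/4 + ε}, for all N large (with κ ∈ (1/2, 2/3), β = 2−3κ). -/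

import Mathlib

open MeasureTheory

/-- The lattice point `t·k ∈ ℝ³` for `k ∈ ℤ³` and spacing `t`. -/
noncomputable def latPt (t : ℝ) (k : Fin 3 → ℤ) : EuclideanSpace ℝ (Fin 3) :=
  WithLp.toLp 2 (fun i => t * (k i : ℝ))

/-- The unit box `Λ = [-1/2,1/2]³`. -/
def unitBox : Set (EuclideanSpace ℝ (Fin 3)) := {x | ∀ i, |x i| ≤ 1/2}

/-- The Voronoi cell of the lattice point `t·k` inside `Λ`, among the lattice points of
spacing `t` lying in `Λ`. -/
def voronoiCell (t : ℝ) (k : Fin 3 → ℤ) : Set (EuclideanSpace ℝ (Fin 3)) :=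
  {x | x ∈ unitBox ∧ ∀ k' : Fin 3 → ℤ, latPt t k' ∈ unitBox →
    ‖x - latPt t k‖ ≤ ‖x - latPt t k'‖}

namespace LocAux

lemma coord_le_norm (x : EuclideanSpace ℝ (Fin 3)) (i : Fin 3) : |x i| ≤ ‖x‖ := by
  rw [EuclideanSpace.norm_eq]
  have h1 : |x i| = Real.sqrt (‖x i‖^2) := by
    rw [Real.sqrt_sq_eq_abs]; simp
  rw [h1]
  apply Real.sqrt_le_sqrt
  exact Finset.single_le_sum (f := fun j => ‖x j‖^2) (fun j _ => by positivity) (Finset.mem_univ i)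

lemma sub_apply (x y : EuclideanSpace ℝ (Fin 3)) (i : Fin 3) : (x - y) i = x i - y i := rfl

lemma norm_le_of_coords {x : EuclideanSpace ℝ (Fin 3)} {r : ℝ} (hr : 0 ≤ r)
    (h : ∀ i, |x i| ≤ r) : ‖x‖ ≤ Real.sqrt 3 * r := by
  rw [EuclideanSpace.norm_eq]
  have : ∑ i, ‖x i‖^2 ≤ 3 * r^2 := by
    have := h 0; have := h 1; have := h 2
    have e : ∑ i, ‖x i‖^2 = ‖x 0‖^2 + ‖x 1‖^2 + ‖x 2‖^2 := by
      simp [Fin.sum_univ_three]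
    rw [e]
    simp only [Real.norm_eq_abs]
    nlinarith [abs_nonneg (x 0), abs_nonneg (x 1), abs_nonneg (x 2), h 0, h 1, h 2,
      sq_abs (x 0), sq_abs (x 1), sq_abs (x 2)]
  calc Real.sqrt (∑ i, ‖x i‖^2) ≤ Real.sqrt (3 * r^2) := Real.sqrt_le_sqrt this
    _ = Real.sqrt 3 * r := by rw [Real.sqrt_mul (by norm_num), Real.sqrt_sq hr]

lemma sqrt3_le_two : Real.sqrt 3 ≤ 2 := by
  nlinarith [Real.sqrt_nonneg 3, Real.sq_sqrt (show (0:ℝ) ≤ 3 by norm_num)]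

lemma exists_near_latPt {t : ℝ} (ht : 0 < t) {x : EuclideanSpace ℝ (Fin 3)}
    (hx : x ∈ unitBox) : ∃ k' : Fin 3 → ℤ, latPt t k' ∈ unitBox ∧
      ‖x - latPt t k'‖ ≤ Real.sqrt 3 * t := by
  refine ⟨fun i => if 0 ≤ x i then ⌊x i / t⌋ else -⌊(-(x i)) / t⌋, ?_, ?_⟩
  · intro i
    show |t * ((if 0 ≤ x i then ⌊x i / t⌋ else -⌊(-(x i)) / t⌋ : ℤ) : ℝ)| ≤ 1/2
    refine le_trans ?_ (hx i)
    split_ifs with h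
    · have h0 : (0:ℝ) ≤ ⌊x i / t⌋ := by
        exact_mod_cast Int.floor_nonneg.2 (div_nonneg h ht.le)
      have h1 : t * (⌊x i / t⌋:ℝ) ≤ x i := by
        have := Int.floor_le (x i / t)
        calc t * (⌊x i / t⌋:ℝ) ≤ t * (x i / t) := by nlinarith
          _ = x i := by rw [mul_comm, div_mul_cancel₀ _ ht.ne']
      rw [abs_of_nonneg (by positivity), abs_of_nonneg h]; exact h1
    · push_neg at h
      have h0 : (0:ℝ) ≤ ⌊(-(x i)) / t⌋ := by
        exact_mod_cast Int.floor_nonneg.2 (div_nonneg (by linarith) ht.le)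
      have h1 : t * (⌊(-(x i)) / t⌋:ℝ) ≤ -(x i) := by
        have := Int.floor_le ((-(x i)) / t)
        calc t * (⌊(-(x i)) / t⌋:ℝ) ≤ t * ((-(x i)) / t) := by nlinarith
          _ = -(x i) := by rw [mul_comm, div_mul_cancel₀ _ ht.ne']
      push_cast
      rw [abs_of_nonpos (by nlinarith), abs_of_neg h]
      linarith
  · apply norm_le_of_coords ht.le
    intro i
    show |x i - t * ((if 0 ≤ x i then ⌊x i / t⌋ else -⌊(-(x i)) / t⌋ : ℤ) : ℝ)| ≤ t
    split_ifs with h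
    · have h1 := Int.floor_le (x i / t)
      have h2 := Int.lt_floor_add_one (x i / t)
      have e1 : t * (x i / t) = x i := by rw [mul_comm, div_mul_cancel₀ _ ht.ne']
      have f1 := mul_le_mul_of_nonneg_left h1 ht.le
      have f2 := mul_lt_mul_of_pos_left h2 ht
      rw [abs_le]
      constructor <;> nlinarith
    · have h1 := Int.floor_le ((-(x i)) / t)
      have h2 := Int.lt_floor_add_one ((-(x i)) / t)
      have e1 : t * ((-(x i)) / t) = -(x i) := by rw [mul_comm, div_mul_cancel₀ _ ht.ne']
      have f1 := mul_le_mul_of_nonneg_left h1 ht.le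
      have f2 := mul_lt_mul_of_pos_left h2 ht
      push_cast
      rw [abs_le]
      constructor <;> nlinarith

lemma voronoi_diam {t : ℝ} (ht : 0 < t) {k : Fin 3 → ℤ} {x : EuclideanSpace ℝ (Fin 3)}
    (hx : x ∈ voronoiCell t k) : ‖x - latPt t k‖ ≤ Real.sqrt 3 * t := by
  obtain ⟨hxB, hmin⟩ := hx
  obtain ⟨k', hk'B, hk'⟩ := exists_near_latPt ht hxB
  exact le_trans (hmin k' hk'B) hk'

lemma continuous_coord (i : Fin 3) : Continuous (fun x : EuclideanSpace ℝ (Fin 3) => x i) := by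
  exact (EuclideanSpace.proj i).continuous

lemma isClosed_unitBox : IsClosed unitBox := by
  have : unitBox = ⋂ i, {x : EuclideanSpace ℝ (Fin 3) | |x i| ≤ 1/2} := by
    ext x; simp [unitBox, Set.mem_iInter]
  rw [this]
  exact isClosed_iInter fun i =>
    isClosed_le (continuous_abs.comp (continuous_coord i)) continuous_const

lemma isClosed_voronoiCell (t : ℝ) (k : Fin 3 → ℤ) : IsClosed (voronoiCell t k) := by
  have : voronoiCell t k = unitBox ∩ ⋂ k' : Fin 3 → ℤ,
      {x : EuclideanSpace ℝ (Fin 3) | latPt t k' ∈ unitBox → ‖x - latPt t k‖ ≤ ‖x - latPt t k'‖} := by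
    ext x
    simp only [voronoiCell, Set.mem_setOf_eq, Set.mem_inter_iff, Set.mem_iInter]
  rw [this]
  refine isClosed_unitBox.inter (isClosed_iInter fun k' => ?_)
  by_cases h : latPt t k' ∈ unitBox
  · simp only [h, forall_true_left]
    exact isClosed_le ((continuous_id.sub continuous_const).norm)
      ((continuous_id.sub continuous_const).norm)
  · have : {x : EuclideanSpace ℝ (Fin 3) | latPt t k' ∈ unitBox →
        ‖x - latPt t k‖ ≤ ‖x - latPt t k'‖} = Set.univ := by
      ext x; simp [h]
    rw [this]; exact isClosed_univ

lemma measurableSet_voronoiCell (t : ℝ) (k : Fin 3 → ℤ) : MeasurableSet (voronoiCell t k) :=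
  (isClosed_voronoiCell t k).measurableSet

lemma volume_coordBox (c : Fin 3 → ℝ) (r : ℝ) :
    volume {x : EuclideanSpace ℝ (Fin 3) | ∀ i, |x i - c i| ≤ r} =
      ENNReal.ofReal (2*r) ^ 3 := by
  have heq : {x : EuclideanSpace ℝ (Fin 3) | ∀ i, |x i - c i| ≤ r}
      = (MeasurableEquiv.toLp 2 (Fin 3 → ℝ)).symm ⁻¹'
        (Set.univ.pi fun i => Set.Icc (c i - r) (c i + r)) := by
    ext x
    have hco : ∀ (y : EuclideanSpace ℝ (Fin 3)) (i : Fin 3),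
        (MeasurableEquiv.toLp 2 (Fin 3 → ℝ)).symm y i = y i := fun _ _ => rfl
    simp only [Set.mem_setOf_eq, Set.mem_preimage, Set.mem_pi, Set.mem_univ, forall_true_left,
      Set.mem_Icc, hco, abs_le]
    constructor
    · intro h i
      have := h i
      constructor <;> [linarith [this.1]; linarith [this.2]]
    · intro h i
      have := h i
      constructor <;> [linarith [this.1]; linarith [this.2]]
  rw [heq, (EuclideanSpace.volume_preserving_symm_measurableEquiv_toLp (Fin 3)).measure_preimage
    ((MeasurableSet.univ_pi fun i => measurableSet_Icc).nullMeasurableSet)]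
  rw [volume_pi_pi]
  simp only [Real.volume_Icc]
  have h2 : ∀ i : Fin 3, c i + r - (c i - r) = 2*r := fun i => by ring
  simp only [h2]
  rw [Finset.prod_const]
  simp

lemma volume_unitBox : volume unitBox = 1 := by
  have : unitBox = {x : EuclideanSpace ℝ (Fin 3) | ∀ i, |x i - (fun _ => (0:ℝ)) i| ≤ 1/2} := by
    ext x; simp [unitBox]
  rw [this, volume_coordBox]
  norm_num

lemma sqrt_cube {t : ℝ} (ht : 0 ≤ t) : Real.sqrt (t^3) = t ^ ((3:ℝ)/2) := by
  rw [show (t:ℝ)^3 = t ^ ((3:ℝ)) by rw [← Real.rpow_natCast t 3]; norm_num,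
      Real.sqrt_eq_rpow, ← Real.rpow_mul ht]
  norm_num

lemma cell_integral_bound {t : ℝ} (ht : 0 < t) (k : Fin 3 → ℤ)
    {f : EuclideanSpace ℝ (Fin 3) → ℝ} (hf : Measurable f) {M : ℝ} (hM : 0 ≤ M)
    (hfM : ∀ x ∈ voronoiCell t k, |f x| ≤ M) :
    Real.sqrt (∫ x in voronoiCell t k, (f x)^2) ≤ M * (8 * t ^ ((3:ℝ)/2)) := by
  set s := voronoiCell t k with hs
  have ms := measurableSet_voronoiCell t k
  have hsub : s ⊆ {x : EuclideanSpace ℝ (Fin 3) | ∀ i, |x i - latPt t k i| ≤ Real.sqrt 3 * t} := by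
    intro x hx i
    have hd := voronoi_diam ht hx
    have h2 := coord_le_norm (x - latPt t k) i
    have h3 : (x - latPt t k) i = x i - latPt t k i := rfl
    rw [h3] at h2
    linarith
  have hvol : volume s ≤ ENNReal.ofReal (2*(Real.sqrt 3 * t)) ^ 3 :=
    le_trans (measure_mono hsub) (le_of_eq (volume_coordBox _ _))
  have hfin : volume s ≠ ⊤ := by
    refine ne_top_of_le_ne_top ?_ hvol
    exact (ENNReal.pow_ne_top ENNReal.ofReal_ne_top)
  have hint : IntegrableOn (fun x => (f x)^2) s := by
    apply Measure.integrableOn_of_bounded hfin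
      ((hf.pow_const 2).aestronglyMeasurable)
    filter_upwards [ae_restrict_mem ms] with x hx
    have : |f x| ≤ M := hfM x hx
    rw [Real.norm_eq_abs]
    calc |(f x)^2| = |f x|^2 := by rw [abs_pow]
      _ ≤ M^2 := by nlinarith [abs_nonneg (f x)]
  have h1 : ∫ x in s, (f x)^2 ≤ ∫ _x in s, M^2 := by
    apply setIntegral_mono_on hint (integrableOn_const hfin) ms
    intro x hx
    have : |f x| ≤ M := hfM x hx
    nlinarith [abs_nonneg (f x), sq_abs (f x)]
  have h2 : ∫ _x in s, (M^2:ℝ) = (volume s).toReal * M^2 := by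
    rw [setIntegral_const]; simp [smul_eq_mul, Measure.real]
  have h3 : (volume s).toReal ≤ (2*(Real.sqrt 3 * t))^3 := by
    have := ENNReal.toReal_mono (ENNReal.pow_ne_top ENNReal.ofReal_ne_top) hvol
    rwa [ENNReal.toReal_pow, ENNReal.toReal_ofReal (by positivity)] at this
  have h4 : (2*(Real.sqrt 3 * t))^3 ≤ 64 * t^3 := by
    have hs3 := sqrt3_le_two
    have h0 : (0:ℝ) ≤ Real.sqrt 3 := Real.sqrt_nonneg 3
    nlinarith [pow_le_pow_left₀ (by positivity : (0:ℝ) ≤ 2*(Real.sqrt 3*t))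
      (by nlinarith : 2*(Real.sqrt 3*t) ≤ 4*t) 3]
  calc Real.sqrt (∫ x in s, (f x)^2) ≤ Real.sqrt (M^2 * (64 * t^3)) := by
        apply Real.sqrt_le_sqrt
        calc ∫ x in s, (f x)^2 ≤ (volume s).toReal * M^2 := h1.trans (le_of_eq h2)
          _ ≤ M^2 * (64 * t^3) := by nlinarith [sq_nonneg M, pow_pos ht 3]
    _ = M * (8 * t ^ ((3:ℝ)/2)) := by
        rw [Real.sqrt_mul (sq_nonneg M), Real.sqrt_sq hM,
          show (64:ℝ) * t^3 = 64 * t^3 from rfl,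
          Real.sqrt_mul (by norm_num : (0:ℝ) ≤ 64), sqrt_cube ht.le,
          show Real.sqrt 64 = 8 by
            rw [show (64:ℝ) = 8^2 by norm_num, Real.sqrt_sq (by norm_num)]]

lemma cell_le_global {t : ℝ} (k : Fin 3 → ℤ) {f : EuclideanSpace ℝ (Fin 3) → ℝ}
    (hf : Measurable f) {A : ℝ} (hfA : ∀ x, |f x| ≤ A) :
    Real.sqrt (∫ x in voronoiCell t k, (f x)^2) ≤ Real.sqrt (∫ x in unitBox, (f x)^2) := by
  apply Real.sqrt_le_sqrt
  apply setIntegral_mono_set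
  · apply Measure.integrableOn_of_bounded (by rw [volume_unitBox]; exact ENNReal.one_ne_top)
      ((hf.pow_const 2).aestronglyMeasurable) (M := A^2)
    apply ae_of_all
    intro x
    have h := hfA x
    rw [Real.norm_eq_abs]
    calc |(f x)^2| = |f x|^2 := by rw [abs_pow]
      _ ≤ A^2 := by nlinarith [abs_nonneg (f x)]
  · exact Filter.Eventually.of_forall fun x => sq_nonneg _
  · exact HasSubset.Subset.eventuallyLE fun x hx => hx.1

lemma mem_bound {t : ℝ} (ht : 0 < t) {k : Fin 3 → ℤ} (hk : latPt t k ∈ unitBox) (i : Fin 3) :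
    k i ∈ Finset.Icc (-(⌈1/(2*t)⌉₊:ℤ)) (⌈1/(2*t)⌉₊:ℤ) := by
  have h1 : |t * (k i:ℝ)| ≤ 1/2 := hk i
  rw [abs_mul, abs_of_pos ht] at h1
  have h2 : |(k i:ℝ)| ≤ 1/(2*t) := by
    rw [le_div_iff₀ (by positivity)]
    nlinarith [abs_nonneg ((k i:ℝ))]
  rw [← Int.cast_abs] at h2
  have h3 : ((|k i|:ℤ):ℝ) ≤ ((⌈1/(2*t)⌉₊:ℤ):ℝ) := by
    refine le_trans h2 ?_
    push_cast
    exact Nat.le_ceil _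
  have h4 : |k i| ≤ (⌈1/(2*t)⌉₊:ℤ) := by exact_mod_cast h3
  rw [Finset.mem_Icc]
  exact ⟨neg_le_of_abs_le h4, le_of_abs_le h4⟩

lemma finite_latt {t : ℝ} (ht : 0 < t) : {k : Fin 3 → ℤ | latPt t k ∈ unitBox}.Finite := by
  apply Set.Finite.subset (Set.Finite.pi (fun i : Fin 3 =>
    (Finset.Icc (-(⌈1/(2*t)⌉₊:ℤ)) (⌈1/(2*t)⌉₊:ℤ)).finite_toSet))
  intro k hk
  exact fun i _ => Finset.mem_coe.mpr (mem_bound ht hk i)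

def nk (k : Fin 3 → ℤ) : ℕ := max (k 0).natAbs (max (k 1).natAbs (k 2).natAbs)

lemma natAbs_le_nk (k : Fin 3 → ℤ) (i : Fin 3) : (k i).natAbs ≤ nk k := by
  fin_cases i
  · exact le_max_left _ _
  · exact le_trans (le_max_left _ _) (le_max_right _ _)
  · exact le_trans (le_max_right _ _) (le_max_right _ _)

lemma exists_natAbs_eq_nk (k : Fin 3 → ℤ) : ∃ i, (k i).natAbs = nk k := by
  unfold nk
  rcases max_cases (k 0).natAbs (max (k 1).natAbs (k 2).natAbs) with ⟨h,_⟩|⟨h,_⟩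
  · exact ⟨0, h.symm⟩
  · rcases max_cases (k 1).natAbs (k 2).natAbs with ⟨h2,_⟩|⟨h2,_⟩
    · exact ⟨1, by rw [h, h2]⟩
    · exact ⟨2, by rw [h, h2]⟩

lemma norm_lower {t : ℝ} (ht : 0 < t) {k : Fin 3 → ℤ} {x : EuclideanSpace ℝ (Fin 3)}
    (hx : x ∈ voronoiCell t k) : t * (nk k : ℝ) - Real.sqrt 3 * t ≤ ‖x‖ := by
  obtain ⟨i, hi⟩ := exists_natAbs_eq_nk k
  have h1 : t * (nk k:ℝ) = |latPt t k i| := by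
    show _ = |t * (k i:ℝ)|
    rw [abs_mul, abs_of_pos ht, ← hi]
    congr 1
    exact (Nat.cast_natAbs _).trans Int.cast_abs
  have h2 : |latPt t k i| ≤ ‖latPt t k‖ := coord_le_norm _ i
  have h3 : ‖latPt t k‖ - ‖x‖ ≤ ‖x - latPt t k‖ := by
    rw [norm_sub_rev]
    exact norm_sub_norm_le _ _
  have h4 := voronoi_diam ht hx
  linarith

lemma sum_prod_le {B : ℤ} {g : ℤ → ℝ} (hg : ∀ j, 0 ≤ g j) {S : ℝ}
    (hgS : ∀ I : Finset ℤ, ∑ j ∈ I, g j ≤ S) :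
    ∑ k ∈ Fintype.piFinset (fun _ : Fin 3 => Finset.Icc (-B) B), (∏ i, g (k i)) ≤ S^3 := by
  rw [← Finset.prod_univ_sum]
  calc ∏ _i : Fin 3, ∑ j ∈ Finset.Icc (-B) B, g j ≤ ∏ _i : Fin 3, S :=
        Finset.prod_le_prod (fun _ _ => Finset.sum_nonneg fun _ _ => hg _) (fun _ _ => hgS _)
    _ = S^3 := by simp [Finset.prod_const]

lemma summable_g {p : ℝ} (hp : 1 < p) : Summable (fun j : ℤ => 1/|(j:ℝ)+1/2|^p) :=
  (Real.summable_one_div_int_add_rpow (1/2) p).mpr hp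

lemma sum_g_le_tsum {p : ℝ} (hp : 1 < p) (I : Finset ℤ) :
    ∑ j ∈ I, 1/|(j:ℝ)+1/2|^p ≤ ∑' j : ℤ, 1/|(j:ℝ)+1/2|^p :=
  Summable.sum_le_tsum I (fun _ _ => by positivity) (summable_g hp)

lemma half_le_abs (j : ℤ) : (1/2:ℝ) ≤ |(j:ℝ)+1/2| := by
  rcases le_or_gt 0 j with h|h
  · have : (0:ℝ) ≤ (j:ℝ) := by exact_mod_cast h
    rw [abs_of_pos (by linarith)]; linarith
  · have : (j:ℝ) ≤ -1 := by exact_mod_cast (by omega : j ≤ -1)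
    rw [abs_of_neg (by linarith)]; linarith

lemma nk_rpow_bound {k : Fin 3 → ℤ} (hk : 1 ≤ nk k) {p c : ℝ} (hp : 0 < p) (hc : c = 3*p) :
    ((nk k:ℝ))^(-c) ≤ (2:ℝ)^c * ∏ i, 1/|(k i:ℝ)+1/2|^p := by
  set n : ℝ := (nk k:ℝ) with hn
  have hn1 : (1:ℝ) ≤ n := by rw [hn]; exact_mod_cast hk
  have habs : ∀ i, |(k i:ℝ)+1/2| ≤ 2*n := by
    intro i
    have h1 : |(k i:ℝ)| ≤ n := by
      have h := natAbs_le_nk k i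
      have h' : ((k i).natAbs:ℝ) ≤ n := by rw [hn]; exact_mod_cast h
      calc |(k i:ℝ)| = ((k i).natAbs:ℝ) := ((Nat.cast_natAbs _).trans Int.cast_abs).symm
        _ ≤ n := h'
    calc |(k i:ℝ)+1/2| ≤ |(k i:ℝ)| + |(1/2:ℝ)| := abs_add_le _ _
      _ ≤ n + 1/2 := by rw [abs_of_pos (by norm_num : (0:ℝ) < 1/2)]; linarith
      _ ≤ 2*n := by linarith
  have hpos : ∀ i, (0:ℝ) < |(k i:ℝ)+1/2| := fun i => lt_of_lt_of_le (by norm_num) (half_le_abs (k i))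
  have hprod : ∏ i, |(k i:ℝ)+1/2|^p ≤ (2*n)^c := by
    calc ∏ i, |(k i:ℝ)+1/2|^p ≤ ∏ _i : Fin 3, (2*n)^p :=
          Finset.prod_le_prod (fun i _ => Real.rpow_nonneg (abs_nonneg _) p)
            (fun i _ => Real.rpow_le_rpow (abs_nonneg _) (habs i) hp.le)
      _ = ((2*n)^p)^(3:ℕ) := by simp [Finset.prod_const]
      _ = (2*n)^c := by
          rw [← Real.rpow_natCast ((2*n)^p) 3, ← Real.rpow_mul (by linarith : (0:ℝ) ≤ 2*n), hc]
          norm_num [mul_comm]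
  have hP0 : (0:ℝ) < ∏ i, |(k i:ℝ)+1/2|^p :=
    Finset.prod_pos (fun i _ => Real.rpow_pos_of_pos (hpos i) _)
  have hnc : (0:ℝ) < n^c := Real.rpow_pos_of_pos (by linarith) _
  have h2c : (0:ℝ) < (2:ℝ)^c := Real.rpow_pos_of_pos (by norm_num) _
  have h2 : (2*n)^c = 2^c * n^c := Real.mul_rpow (by norm_num) (by linarith)
  rw [Real.rpow_neg (by linarith : (0:ℝ) ≤ n)]
  have hinv : ∏ i, (1/|(k i:ℝ)+1/2|^p) = (∏ i, |(k i:ℝ)+1/2|^p)⁻¹ := by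
    rw [← Finset.prod_inv_distrib]
    simp [one_div]
  rw [hinv]
  rw [h2] at hprod
  have hPinv : ((2:ℝ)^c * n^c)⁻¹ ≤ (∏ i, |(k i:ℝ)+1/2|^p)⁻¹ :=
    inv_anti₀ hP0 hprod
  calc (n^c)⁻¹ = 2^c * ((2:ℝ)^c * n^c)⁻¹ := by
        rw [mul_inv]
        field_simp
    _ ≤ 2^c * (∏ i, |(k i:ℝ)+1/2|^p)⁻¹ :=
        mul_le_mul_of_nonneg_left hPinv h2c.le

lemma midnum (C S e κ a q s ε N : ℝ) (hC : 0 < C) (hS0 : 0 ≤ S) (hN1 : 1 ≤ N)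
    (he0 : 0 < e)
    (hE : κ/4 + a*(-((5:ℝ)/2)) + a*((3:ℝ)/2) + q*(1/2+s) + e/2 ≤ 3*κ/4 + ε) :
    (C * (Real.log N)^3 * N^(κ/4) * (N^a/2)^(-(5:ℝ)/2) * (8 * (N^a)^((3:ℝ)/2))
      * ((2:ℝ)^((3:ℝ)+s) * (N^q)^(1/2+s))) * S^3
      ≤ (C * (6/e)^3 * (2:ℝ)^((5:ℝ)/2) * 8 * (2:ℝ)^((3:ℝ)+s) * S^3) * N^(3*κ/4+ε) := by
  have hN0 : (0:ℝ) < N := lt_of_lt_of_le one_pos hN1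
  have hlog : 0 ≤ Real.log N := Real.log_nonneg hN1
  -- rewrite the three compound powers
  have key1 : (N^a/2)^(-(5:ℝ)/2) = (2:ℝ)^((5:ℝ)/2) * N^(a * (-((5:ℝ)/2))) := by
    rw [show (-(5:ℝ)/2) = -((5:ℝ)/2) by norm_num,
      Real.div_rpow (Real.rpow_nonneg hN0.le a) (by norm_num : (0:ℝ) ≤ 2),
      ← Real.rpow_mul hN0.le, Real.rpow_neg (by norm_num : (0:ℝ) ≤ 2), div_inv_eq_mul]
    ring
  have key2 : (N^a)^((3:ℝ)/2) = N^(a * ((3:ℝ)/2)) := (Real.rpow_mul hN0.le a _).symm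
  have key3 : (N^q)^(1/2+s) = N^(q * (1/2+s)) := (Real.rpow_mul hN0.le q _).symm
  -- log bound
  have hlog6 : Real.log N ≤ (6/e) * N^(e/6) := by
    have h := Real.log_le_rpow_div hN0.le (show (0:ℝ) < e/6 by positivity)
    calc Real.log N ≤ N^(e/6) / (e/6) := h
      _ = (6/e) * N^(e/6) := by field_simp
  have hlog3 : (Real.log N)^3 ≤ (6/e)^3 * N^(e/2) := by
    calc (Real.log N)^3 ≤ ((6/e) * N^(e/6))^3 := pow_le_pow_left₀ hlog hlog6 3
      _ = (6/e)^3 * (N^(e/6))^(3:ℕ) := by rw [mul_pow]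
      _ = (6/e)^3 * N^(e/2) := by
          rw [← Real.rpow_natCast (N^(e/6)) 3, ← Real.rpow_mul hN0.le]
          congr 2
          push_cast
          ring
  -- merge N powers
  have hmerge : N^(κ/4) * (N^(a * (-((5:ℝ)/2))) * (N^(a*((3:ℝ)/2)) * (N^(q*(1/2+s)) * N^(e/2))))
      = N^(κ/4 + a*(-((5:ℝ)/2)) + a*((3:ℝ)/2) + q*(1/2+s) + e/2) := by
    rw [← Real.rpow_add hN0, ← Real.rpow_add hN0, ← Real.rpow_add hN0, ← Real.rpow_add hN0]
    congr 1
    ring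
  set Z : ℝ := C * N^(κ/4) * ((2:ℝ)^((5:ℝ)/2) * N^(a * (-((5:ℝ)/2)))) * (8 * N^(a*((3:ℝ)/2)))
      * ((2:ℝ)^((3:ℝ)+s) * N^(q*(1/2+s))) * S^3 with hZ_def
  have hZ0 : 0 ≤ Z := by positivity
  have hstep1 : (C * (Real.log N)^3 * N^(κ/4) * (N^a/2)^(-(5:ℝ)/2) * (8 * (N^a)^((3:ℝ)/2))
      * ((2:ℝ)^((3:ℝ)+s) * (N^q)^(1/2+s))) * S^3 = (Real.log N)^3 * Z := by
    rw [key1, key2, key3, hZ_def]; ring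
  have hstep2 : (Real.log N)^3 * Z ≤ ((6/e)^3 * N^(e/2)) * Z :=
    mul_le_mul_of_nonneg_right hlog3 hZ0
  have hstep3 : ((6/e)^3 * N^(e/2)) * Z
      = (C * (6/e)^3 * (2:ℝ)^((5:ℝ)/2) * 8 * (2:ℝ)^((3:ℝ)+s) * S^3)
        * (N^(κ/4) * (N^(a * (-((5:ℝ)/2))) * (N^(a*((3:ℝ)/2)) * (N^(q*(1/2+s)) * N^(e/2))))) := by
    rw [hZ_def]; ring
  have hstep4 : N^(κ/4 + a*(-((5:ℝ)/2)) + a*((3:ℝ)/2) + q*(1/2+s) + e/2) ≤ N^(3*κ/4+ε) :=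
    Real.rpow_le_rpow_of_exponent_le hN1 hE
  calc (C * (Real.log N)^3 * N^(κ/4) * (N^a/2)^(-(5:ℝ)/2) * (8 * (N^a)^((3:ℝ)/2))
      * ((2:ℝ)^((3:ℝ)+s) * (N^q)^(1/2+s))) * S^3
      = (Real.log N)^3 * Z := hstep1
    _ ≤ ((6/e)^3 * N^(e/2)) * Z := hstep2
    _ = (C * (6/e)^3 * (2:ℝ)^((5:ℝ)/2) * 8 * (2:ℝ)^((3:ℝ)+s) * S^3)
        * (N^(κ/4) * (N^(a * (-((5:ℝ)/2))) * (N^(a*((3:ℝ)/2)) * (N^(q*(1/2+s)) * N^(e/2))))) := hstep3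
    _ = (C * (6/e)^3 * (2:ℝ)^((5:ℝ)/2) * 8 * (2:ℝ)^((3:ℝ)+s) * S^3)
        * N^(κ/4 + a*(-((5:ℝ)/2)) + a*((3:ℝ)/2) + q*(1/2+s) + e/2) := by rw [hmerge]
    _ ≤ _ := by
        apply mul_le_mul_of_nonneg_left hstep4
        positivity

lemma farnum (D S κ a b q s ε N : ℝ) (m : ℕ) (hD0 : 0 ≤ D) (hS0 : 0 ≤ S) (hN1 : 1 ≤ N)
    (hEfar : 1 + (b-a)*(m:ℝ) + a*((3:ℝ)/2) + q*((3:ℝ)+s-(m:ℝ)) ≤ 0)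
    (hpos : 0 ≤ 3*κ/4 + ε) :
    (D * N * ((2*N^b/N^a))^m * (8 * (N^a)^((3:ℝ)/2))
      * ((2:ℝ)^((3:ℝ)+s) * (N^q)^((3:ℝ)+s-(m:ℝ)))) * S^3
      ≤ (D * (2:ℝ)^m * 8 * (2:ℝ)^((3:ℝ)+s) * S^3) * N^(3*κ/4+ε) := by
  have hN0 : (0:ℝ) < N := lt_of_lt_of_le one_pos hN1
  have key1 : ((2*N^b/N^a))^m = (2:ℝ)^m * N^((b-a)*(m:ℝ)) := by
    have h : 2*N^b/N^a = 2 * N^(b-a) := by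
      rw [Real.rpow_sub hN0]; ring
    rw [h, mul_pow, ← Real.rpow_natCast (N^(b-a)) m, ← Real.rpow_mul hN0.le]
  have key2 : (N^a)^((3:ℝ)/2) = N^(a * ((3:ℝ)/2)) := (Real.rpow_mul hN0.le a _).symm
  have key3 : (N^q)^((3:ℝ)+s-(m:ℝ)) = N^(q * ((3:ℝ)+s-(m:ℝ))) := (Real.rpow_mul hN0.le q _).symm
  have hmerge : N * (N^((b-a)*(m:ℝ)) * (N^(a*((3:ℝ)/2)) * N^(q*((3:ℝ)+s-(m:ℝ)))))
      = N^(1 + (b-a)*(m:ℝ) + a*((3:ℝ)/2) + q*((3:ℝ)+s-(m:ℝ))) := by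
    nth_rewrite 1 [show N = N^(1:ℝ) from (Real.rpow_one N).symm]
    rw [← Real.rpow_add hN0, ← Real.rpow_add hN0, ← Real.rpow_add hN0]
    congr 1
    ring
  have hNE : N^(1 + (b-a)*(m:ℝ) + a*((3:ℝ)/2) + q*((3:ℝ)+s-(m:ℝ))) ≤ 1 :=
    Real.rpow_le_one_of_one_le_of_nonpos hN1 hEfar
  have hN1' : (1:ℝ) ≤ N^(3*κ/4+ε) := by
    have := Real.rpow_le_rpow_of_exponent_le hN1 hpos
    rwa [Real.rpow_zero] at this
  have hstep1 : (D * N * ((2*N^b/N^a))^m * (8 * (N^a)^((3:ℝ)/2))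
      * ((2:ℝ)^((3:ℝ)+s) * (N^q)^((3:ℝ)+s-(m:ℝ)))) * S^3
      = (D * (2:ℝ)^m * 8 * (2:ℝ)^((3:ℝ)+s) * S^3)
        * (N * (N^((b-a)*(m:ℝ)) * (N^(a*((3:ℝ)/2)) * N^(q*((3:ℝ)+s-(m:ℝ)))))) := by
    rw [key1, key2, key3]; ring
  rw [hstep1, hmerge]
  have hK0 : (0:ℝ) ≤ D * (2:ℝ)^m * 8 * (2:ℝ)^((3:ℝ)+s) * S^3 := by positivity
  calc (D * (2:ℝ)^m * 8 * (2:ℝ)^((3:ℝ)+s) * S^3)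
        * N^(1 + (b-a)*(m:ℝ) + a*((3:ℝ)/2) + q*((3:ℝ)+s-(m:ℝ)))
      ≤ (D * (2:ℝ)^m * 8 * (2:ℝ)^((3:ℝ)+s) * S^3) * 1 := mul_le_mul_of_nonneg_left hNE hK0
    _ ≤ (D * (2:ℝ)^m * 8 * (2:ℝ)^((3:ℝ)+s) * S^3) * N^(3*κ/4+ε) :=
        mul_le_mul_of_nonneg_left hN1' hK0

end LocAux

open LocAux in
set_option maxHeartbeats 1000000 in
/-- Localization of an `L²` kernel on boxes of side `ℓ_B = N^{-κ/2+β/12}`: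
if `|f(x)| ≤ C min(N, (log N)³ N^{κ/4}/|x|^{5/2})`, `|f(x)| ≤ C_m N (ℓ_σ/|x|)^m`
for every `m ≥ 2` (`ℓ_σ = N^{-κ/2+β/4}`), and `‖f‖₂ ≤ C N^{3κ/4}`, then for every
`ε > 0` there is `C_ε` with `Σ_{u ∈ Λ_B} ‖f·1_{B_u}‖₂ ≤ C_ε N^{3κ/4+ε}` for all large
`N`, where `β = 2−3κ`, `κ ∈ (1/2, 2/3)`. -/
theorem localized_L2_sum_bound (κ C : ℝ) (hκ1 : 1/2 < κ) (hκ2 : κ < 2/3) (hC : 0 < C)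
    (Cm : ℕ → ℝ) (ε : ℝ) (hε : 0 < ε) :
    ∃ Cε : ℝ, 0 < Cε ∧ ∃ N₀ : ℝ, ∀ N : ℝ, N₀ ≤ N →
      ∀ f : EuclideanSpace ℝ (Fin 3) → ℝ, Measurable f →
        (∀ x, |f x| ≤ C * min N ((Real.log N)^3 * N^(κ/4) / ‖x‖^((5:ℝ)/2))) →
        (∀ m : ℕ, 2 ≤ m → ∀ x,
          |f x| ≤ Cm m * N * (N^(-κ/2 + (2-3*κ)/4) / ‖x‖)^m) →
        Real.sqrt (∫ x in unitBox, (f x)^2) ≤ C * N^(3*κ/4) →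
        (∑' u : {k : Fin 3 → ℤ // latPt (N^(-κ/2 + (2-3*κ)/12)) k ∈ unitBox},
            Real.sqrt (∫ x in voronoiCell (N^(-κ/2 + (2-3*κ)/12)) u.1, (f x)^2))
          ≤ Cε * N^(3*κ/4 + ε) := by
  classical
  set e := min ε 1 with he_def
  have he0 : 0 < e := lt_min hε one_pos
  have he1 : e ≤ 1 := min_le_right _ _
  have heε : e ≤ ε := min_le_left _ _
  set s : ℝ := e/2 with hs_def
  set p : ℝ := 1 + s/3 with hp_def
  have hp1 : 1 < p := by rw [hp_def, hs_def]; linarith only [he0]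
  have hp0 : 0 < p := by linarith only [hp1]
  have hc3 : (3:ℝ) + s = 3 * p := by rw [hp_def]; ring
  set δ : ℝ := e/8 with hδ_def
  set m : ℕ := ⌈(48:ℝ)/e⌉₊ with hm_def
  have hm48 : (48:ℝ)/e ≤ (m:ℝ) := Nat.le_ceil _
  have hmR : (48:ℝ) ≤ e * m := by
    rw [div_le_iff₀ he0] at hm48; linarith only [hm48]
  have hm48' : (48:ℝ) ≤ (m:ℝ) := by
    calc (48:ℝ) ≤ e * (m:ℝ) := hmR
      _ ≤ 1 * (m:ℝ) := mul_le_mul_of_nonneg_right he1 (Nat.cast_nonneg m)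
      _ = (m:ℝ) := one_mul _
  have hm2 : 2 ≤ m := by exact_mod_cast (by linarith only [hm48'] : (2:ℝ) ≤ (m:ℝ))
  set S : ℝ := ∑' j : ℤ, 1/|(j:ℝ)+1/2|^p with hS_def
  have hS0 : 0 ≤ S := tsum_nonneg fun j => by positivity
  set D := max (Cm m) 0 with hD_def
  have hD0 : 0 ≤ D := le_max_right _ _
  have hDm : Cm m ≤ D := le_max_left _ _
  set Kmid : ℝ := C * (6/e)^3 * (2:ℝ)^((5:ℝ)/2) * 8 * (2:ℝ)^((3:ℝ)+s) * S^3 with hKmid_def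
  set Kfar : ℝ := D * (2:ℝ)^m * 8 * (2:ℝ)^((3:ℝ)+s) * S^3 with hKfar_def
  have hKmid0 : 0 ≤ Kmid := by positivity
  have hKfar0 : 0 ≤ Kfar := by positivity
  refine ⟨343*C + Kmid + Kfar + 1, by positivity, 1, fun N hN1 f hf hf1 hf2 hL2 => ?_⟩
  have hN0 : (0:ℝ) < N := lt_of_lt_of_le one_pos hN1
  set β : ℝ := 2 - 3*κ with hβ_def
  have hβ0 : 0 < β := by rw [hβ_def]; linarith only [hκ2]
  have hβlt : β < 1/2 := by rw [hβ_def]; linarith only [hκ1]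
  set a : ℝ := -κ/2 + β/12 with ha_def
  have ha_neg : a < 0 := by rw [ha_def, hβ_def]; linarith only [hκ1]
  set b : ℝ := -κ/2 + β/4 with hb_def
  have hba : b - a = β/6 := by rw [ha_def, hb_def]; ring
  set t : ℝ := N^a with ht_def
  have ht0 : 0 < t := Real.rpow_pos_of_pos hN0 a
  set L : ℝ := N^b with hL_def
  have hL0 : 0 < L := Real.rpow_pos_of_pos hN0 b
  set q : ℝ := β/6 + δ with hq_def
  have hq0 : 0 < q := by rw [hq_def, hδ_def]; positivity
  set R : ℝ := N^q with hR_def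
  have hR0 : 0 < R := Real.rpow_pos_of_pos hN0 q
  have hR1 : 1 ≤ R := by
    have := Real.rpow_le_rpow_of_exponent_le hN1 hq0.le
    rwa [Real.rpow_zero] at this
  have hlog : 0 ≤ Real.log N := Real.log_nonneg hN1
  -- finiteness and reduction to a finite sum
  haveI : Finite {k : Fin 3 → ℤ // latPt t k ∈ unitBox} := (finite_latt ht0).to_subtype
  haveI : Fintype {k : Fin 3 → ℤ // latPt t k ∈ unitBox} := Fintype.ofFinite _
  rw [tsum_fintype]
  set F : (Fin 3 → ℤ) → ℝ := fun k => Real.sqrt (∫ x in voronoiCell t k, (f x)^2) with hF_def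
  have hF0 : ∀ k, 0 ≤ F k := fun k => Real.sqrt_nonneg _
  have hG0 : ∀ k : Fin 3 → ℤ, 0 ≤ ∏ i, 1/|(k i:ℝ)+1/2|^p :=
    fun k => Finset.prod_nonneg fun i _ => by positivity
  set B : ℤ := (⌈1/(2*t)⌉₊:ℤ) with hB_def
  set A : Finset (Fin 3 → ℤ) := Fintype.piFinset (fun _ : Fin 3 => Finset.Icc (-B) B) with hA_def
  have hsum1 : ∑ u : {k : Fin 3 → ℤ // latPt t k ∈ unitBox}, F u.1 ≤ ∑ k ∈ A, F k := by
    have himg : (Finset.univ.image (Subtype.val :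
        {k : Fin 3 → ℤ // latPt t k ∈ unitBox} → (Fin 3 → ℤ))) ⊆ A := by
      intro k hk
      simp only [Finset.mem_image] at hk
      obtain ⟨u, _, rfl⟩ := hk
      rw [hA_def, Fintype.mem_piFinset]
      exact fun i => mem_bound ht0 u.2 i
    have heq : ∑ k ∈ Finset.univ.image (Subtype.val :
          {k : Fin 3 → ℤ // latPt t k ∈ unitBox} → (Fin 3 → ℤ)), F k
        = ∑ u : {k : Fin 3 → ℤ // latPt t k ∈ unitBox}, F u.1 :=
      Finset.sum_image (fun x _ y _ h => Subtype.ext h)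
    calc ∑ u : {k : Fin 3 → ℤ // latPt t k ∈ unitBox}, F u.1
        = ∑ k ∈ Finset.univ.image (Subtype.val :
            {k : Fin 3 → ℤ // latPt t k ∈ unitBox} → (Fin 3 → ℤ)), F k := heq.symm
      _ ≤ ∑ k ∈ A, F k :=
          Finset.sum_le_sum_of_subset_of_nonneg himg (fun k _ _ => hF0 k)
  -- global pointwise bound
  have hCN : ∀ x, |f x| ≤ C * N := fun x =>
    le_trans (hf1 x) (mul_le_mul_of_nonneg_left (min_le_left _ _) hC.le)
  have hnear_term : ∀ k, F k ≤ C * N^(3*κ/4) :=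
    fun k => le_trans (cell_le_global k hf hCN) hL2
  -- lower bound for ‖x‖ on far cells
  have hcommon : ∀ k : Fin 3 → ℤ, 4 ≤ nk k → ∀ x ∈ voronoiCell t k,
      t * (nk k:ℝ)/2 ≤ ‖x‖ ∧ 0 < t * (nk k:ℝ)/2 := by
    intro k hk x hx
    have h1 := norm_lower ht0 hx
    have h2 := sqrt3_le_two
    have h3 := Real.sqrt_nonneg 3
    have hn4 : (4:ℝ) ≤ (nk k:ℝ) := by exact_mod_cast hk
    have h5 : 0 ≤ (nk k:ℝ)/2 - Real.sqrt 3 := by linarith only [hn4, h2]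
    have h6 : 0 ≤ t * ((nk k:ℝ)/2 - Real.sqrt 3) := mul_nonneg ht0.le h5
    have h7 : t * ((nk k:ℝ)/2 - Real.sqrt 3)
        = (t * (nk k:ℝ) - Real.sqrt 3 * t) - t * (nk k:ℝ)/2 := by ring
    constructor
    · rw [h7] at h6; linarith only [h6, h1]
    · have : (0:ℝ) < t * (nk k:ℝ) := mul_pos ht0 (by linarith only [hn4])
      linarith only [this]
  -- the three sums
  have hsplit : ∑ k ∈ A, F k
      = ∑ k ∈ A.filter (fun k => nk k ≤ 3), F k
        + (∑ k ∈ (A.filter (fun k => ¬ nk k ≤ 3)).filter (fun k => (nk k:ℝ) ≤ R), F k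
          + ∑ k ∈ (A.filter (fun k => ¬ nk k ≤ 3)).filter (fun k => ¬ (nk k:ℝ) ≤ R), F k) := by
    rw [Finset.sum_filter_add_sum_filter_not, Finset.sum_filter_add_sum_filter_not]
  -- near part
  have hnear : ∑ k ∈ A.filter (fun k => nk k ≤ 3), F k ≤ 343 * (C * N^(3*κ/4)) := by
    have hcard : ((A.filter (fun k => nk k ≤ 3)).card : ℝ) ≤ 343 := by
      have hsub : A.filter (fun k => nk k ≤ 3)
          ⊆ Fintype.piFinset (fun _ : Fin 3 => Finset.Icc (-3:ℤ) 3) := by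
        intro k hk
        rw [Finset.mem_filter] at hk
        rw [Fintype.mem_piFinset]
        intro i
        have h1 : (k i).natAbs ≤ 3 := le_trans (natAbs_le_nk k i) hk.2
        rw [Finset.mem_Icc]
        omega
      have := Finset.card_le_card hsub
      have hcard1 : ((Finset.Icc (-3:ℤ) 3)).card = 7 := by rw [Int.card_Icc]; rfl
      have hcards : (Fintype.piFinset (fun _ : Fin 3 => Finset.Icc (-3:ℤ) 3)).card = 343 := by
        rw [Fintype.card_piFinset]
        simp [hcard1]
      rw [hcards] at this
      exact_mod_cast this
    calc ∑ k ∈ A.filter (fun k => nk k ≤ 3), F k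
        ≤ ∑ _k ∈ A.filter (fun k => nk k ≤ 3), (C * N^(3*κ/4)) :=
          Finset.sum_le_sum (fun k _ => hnear_term k)
      _ = ((A.filter (fun k => nk k ≤ 3)).card : ℝ) * (C * N^(3*κ/4)) := by
          rw [Finset.sum_const, nsmul_eq_mul]
      _ ≤ 343 * (C * N^(3*κ/4)) :=
          mul_le_mul_of_nonneg_right hcard (by positivity)
  -- mid part
  set Λmid : ℝ := C * (Real.log N)^3 * N^(κ/4) * (t/2)^(-(5:ℝ)/2) * (8 * t^((3:ℝ)/2))
      * ((2:ℝ)^((3:ℝ)+s) * R^(1/2+s)) with hΛmid_def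
  have hΛmid0 : 0 ≤ Λmid := by positivity
  have hmid : ∑ k ∈ (A.filter (fun k => ¬ nk k ≤ 3)).filter (fun k => (nk k:ℝ) ≤ R), F k
      ≤ Λmid * S^3 := by
    have hterm : ∀ k ∈ (A.filter (fun k => ¬ nk k ≤ 3)).filter (fun k => (nk k:ℝ) ≤ R),
        F k ≤ Λmid * (∏ i, 1/|(k i:ℝ)+1/2|^p) := by
      intro k hk
      rw [Finset.mem_filter] at hk
      have h4 : 4 ≤ nk k := by
        have := (Finset.mem_filter.mp hk.1).2
        omega
      have hRk : (nk k:ℝ) ≤ R := hk.2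
      have hn4 : (4:ℝ) ≤ (nk k:ℝ) := by exact_mod_cast h4
      have hn0 : (0:ℝ) < (nk k:ℝ) := by linarith only [hn4]
      have hn1 : (1:ℝ) ≤ (nk k:ℝ) := by linarith only [hn4]
      set n : ℝ := (nk k:ℝ) with hn_def
      -- pointwise bound on the cell
      have hM0 : 0 ≤ C * (Real.log N)^3 * N^(κ/4) * ((t*n/2))^(-(5:ℝ)/2) := by positivity
      have hfM : ∀ x ∈ voronoiCell t k, |f x|
          ≤ C * (Real.log N)^3 * N^(κ/4) * ((t*n/2))^(-(5:ℝ)/2) := by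
        intro x hx
        obtain ⟨hxn, hxp⟩ := hcommon k h4 x hx
        refine le_trans (hf1 x) ?_
        have h5 : min N ((Real.log N)^3 * N^(κ/4) / ‖x‖^((5:ℝ)/2))
            ≤ (Real.log N)^3 * N^(κ/4) / ‖x‖^((5:ℝ)/2) := min_le_right _ _
        have h6 : (Real.log N)^3 * N^(κ/4) / ‖x‖^((5:ℝ)/2)
            ≤ (Real.log N)^3 * N^(κ/4) * ((t*n/2))^(-(5:ℝ)/2) := by
          rw [div_eq_mul_inv,
            show (-(5:ℝ)/2) = -((5:ℝ)/2) by norm_num, Real.rpow_neg hxp.le]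
          apply mul_le_mul_of_nonneg_left _ (by positivity)
          apply inv_anti₀ (Real.rpow_pos_of_pos hxp _)
          exact Real.rpow_le_rpow hxp.le hxn (by norm_num)
        calc C * min N ((Real.log N)^3 * N^(κ/4) / ‖x‖^((5:ℝ)/2))
            ≤ C * ((Real.log N)^3 * N^(κ/4) / ‖x‖^((5:ℝ)/2)) :=
              mul_le_mul_of_nonneg_left h5 hC.le
          _ ≤ C * ((Real.log N)^3 * N^(κ/4) * ((t*n/2))^(-(5:ℝ)/2)) :=
              mul_le_mul_of_nonneg_left h6 hC.le
          _ = C * (Real.log N)^3 * N^(κ/4) * ((t*n/2))^(-(5:ℝ)/2) := by ring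
      have hF1 := cell_integral_bound ht0 k hf hM0 hfM
      -- split the rpow
      have hsplit_rpow : ((t*n/2))^(-(5:ℝ)/2) = (t/2)^(-(5:ℝ)/2) * n^(-(5:ℝ)/2) := by
        rw [show t*n/2 = (t/2)*n by ring, Real.mul_rpow (by positivity) (by positivity)]
      have hnsplit : n^(-(5:ℝ)/2) = n^(-((3:ℝ)+s)) * n^((1:ℝ)/2+s) := by
        rw [← Real.rpow_add hn0]; congr 1; ring
      have hnR : n^((1:ℝ)/2+s) ≤ R^((1:ℝ)/2+s) := by
        apply Real.rpow_le_rpow hn0.le hRk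
        rw [hs_def]; linarith only [he0]
      have hnG : n^(-((3:ℝ)+s)) ≤ (2:ℝ)^((3:ℝ)+s) * (∏ i, 1/|(k i:ℝ)+1/2|^p) := by
        have h := nk_rpow_bound (by omega : 1 ≤ nk k) hp0 hc3
        rw [← hn_def] at h
        exact h
      calc F k ≤ C * (Real.log N)^3 * N^(κ/4) * ((t*n/2))^(-(5:ℝ)/2) * (8 * t^((3:ℝ)/2)) := hF1
        _ = (C * (Real.log N)^3 * N^(κ/4) * (t/2)^(-(5:ℝ)/2) * (8 * t^((3:ℝ)/2)))
              * (n^(-((3:ℝ)+s)) * n^((1:ℝ)/2+s)) := by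
            rw [hsplit_rpow, hnsplit]; ring
        _ ≤ (C * (Real.log N)^3 * N^(κ/4) * (t/2)^(-(5:ℝ)/2) * (8 * t^((3:ℝ)/2)))
              * (((2:ℝ)^((3:ℝ)+s) * (∏ i, 1/|(k i:ℝ)+1/2|^p)) * R^((1:ℝ)/2+s)) := by
            apply mul_le_mul_of_nonneg_left _ (by positivity)
            apply mul_le_mul hnG hnR (by positivity) (by positivity)
        _ = Λmid * (∏ i, 1/|(k i:ℝ)+1/2|^p) := by rw [hΛmid_def]; ring
    calc ∑ k ∈ (A.filter (fun k => ¬ nk k ≤ 3)).filter (fun k => (nk k:ℝ) ≤ R), F k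
        ≤ ∑ k ∈ (A.filter (fun k => ¬ nk k ≤ 3)).filter (fun k => (nk k:ℝ) ≤ R), Λmid * (∏ i, 1/|(k i:ℝ)+1/2|^p) :=
          Finset.sum_le_sum hterm
      _ ≤ ∑ k ∈ A, Λmid * (∏ i, 1/|(k i:ℝ)+1/2|^p) := by
          apply Finset.sum_le_sum_of_subset_of_nonneg
          · exact subset_trans (Finset.filter_subset _ _) (Finset.filter_subset _ _)
          · intro k _ _
            exact mul_nonneg hΛmid0 (hG0 k)
      _ = Λmid * ∑ k ∈ A, (∏ i, 1/|(k i:ℝ)+1/2|^p) := by rw [← Finset.mul_sum]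
      _ ≤ Λmid * S^3 := by
          apply mul_le_mul_of_nonneg_left _ hΛmid0
          rw [hA_def]
          exact sum_prod_le (fun j => by positivity) (sum_g_le_tsum hp1)
  -- far part
  set Λfar : ℝ := D * N * ((2*L/t))^m * (8 * t^((3:ℝ)/2))
      * ((2:ℝ)^((3:ℝ)+s) * R^((3:ℝ)+s-(m:ℝ))) with hΛfar_def
  have hΛfar0 : 0 ≤ Λfar := by positivity
  have hfar : ∑ k ∈ (A.filter (fun k => ¬ nk k ≤ 3)).filter (fun k => ¬ (nk k:ℝ) ≤ R), F k
      ≤ Λfar * S^3 := by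
    have hterm : ∀ k ∈ (A.filter (fun k => ¬ nk k ≤ 3)).filter (fun k => ¬ (nk k:ℝ) ≤ R),
        F k ≤ Λfar * (∏ i, 1/|(k i:ℝ)+1/2|^p) := by
      intro k hk
      rw [Finset.mem_filter] at hk
      have h4 : 4 ≤ nk k := by
        have := (Finset.mem_filter.mp hk.1).2
        omega
      have hRk : R ≤ (nk k:ℝ) := le_of_not_ge hk.2
      have hn4 : (4:ℝ) ≤ (nk k:ℝ) := by exact_mod_cast h4
      have hn0 : (0:ℝ) < (nk k:ℝ) := by linarith only [hn4]
      set n : ℝ := (nk k:ℝ) with hn_def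
      have hM0 : 0 ≤ D * N * ((2*L/(t*n)))^m := by positivity
      have hfM : ∀ x ∈ voronoiCell t k, |f x| ≤ D * N * ((2*L/(t*n)))^m := by
        intro x hx
        obtain ⟨hxn, hxp⟩ := hcommon k h4 x hx
        refine le_trans (hf2 m hm2 x) ?_
        have h5 : L/‖x‖ ≤ 2*L/(t*n) := by
          rw [show (2:ℝ)*L/(t*n) = L/(t*n/2) by field_simp]
          exact div_le_div_of_nonneg_left hL0.le hxp hxn
        have h6 : (L/‖x‖)^m ≤ (2*L/(t*n))^m := by
          apply pow_le_pow_left₀ (by positivity) h5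
        calc Cm m * N * (L/‖x‖)^m ≤ D * N * (L/‖x‖)^m := by
              apply mul_le_mul_of_nonneg_right _ (by positivity)
              exact mul_le_mul_of_nonneg_right hDm hN0.le
          _ ≤ D * N * (2*L/(t*n))^m := by
              apply mul_le_mul_of_nonneg_left h6 (by positivity)
      have hF1 := cell_integral_bound ht0 k hf hM0 hfM
      have hsplit_pow : ((2*L/(t*n)))^m = ((2*L/t))^m * ((1:ℝ)/n)^m := by
        rw [← mul_pow]
        congr 1
        field_simp
      have hinv : ((1:ℝ)/n)^m = n^(-(m:ℝ)) := by
        rw [one_div, inv_pow, ← Real.rpow_natCast n m, ← Real.rpow_neg hn0.le]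
      have hnsplit : n^(-(m:ℝ)) = n^(-((3:ℝ)+s)) * n^((3:ℝ)+s-(m:ℝ)) := by
        rw [← Real.rpow_add hn0]; congr 1; ring
      have hnR : n^((3:ℝ)+s-(m:ℝ)) ≤ R^((3:ℝ)+s-(m:ℝ)) := by
        apply Real.rpow_le_rpow_of_nonpos hR0 hRk
        rw [hs_def]
        linarith only [hm48', he1]
      have hnG : n^(-((3:ℝ)+s)) ≤ (2:ℝ)^((3:ℝ)+s) * (∏ i, 1/|(k i:ℝ)+1/2|^p) := by
        have h := nk_rpow_bound (by omega : 1 ≤ nk k) hp0 hc3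
        rw [← hn_def] at h
        exact h
      calc F k ≤ D * N * ((2*L/(t*n)))^m * (8 * t^((3:ℝ)/2)) := hF1
        _ = (D * N * ((2*L/t))^m * (8 * t^((3:ℝ)/2))) * (n^(-((3:ℝ)+s)) * n^((3:ℝ)+s-(m:ℝ))) := by
            rw [hsplit_pow, hinv, hnsplit]; ring
        _ ≤ (D * N * ((2*L/t))^m * (8 * t^((3:ℝ)/2)))
              * (((2:ℝ)^((3:ℝ)+s) * (∏ i, 1/|(k i:ℝ)+1/2|^p)) * R^((3:ℝ)+s-(m:ℝ))) := by
            apply mul_le_mul_of_nonneg_left _ (by positivity)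
            apply mul_le_mul hnG hnR (by positivity) (by positivity)
        _ = Λfar * (∏ i, 1/|(k i:ℝ)+1/2|^p) := by rw [hΛfar_def]; ring
    calc ∑ k ∈ (A.filter (fun k => ¬ nk k ≤ 3)).filter (fun k => ¬ (nk k:ℝ) ≤ R), F k
        ≤ ∑ k ∈ (A.filter (fun k => ¬ nk k ≤ 3)).filter (fun k => ¬ (nk k:ℝ) ≤ R), Λfar * (∏ i, 1/|(k i:ℝ)+1/2|^p) :=
          Finset.sum_le_sum hterm
      _ ≤ ∑ k ∈ A, Λfar * (∏ i, 1/|(k i:ℝ)+1/2|^p) := by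
          apply Finset.sum_le_sum_of_subset_of_nonneg
          · exact subset_trans (Finset.filter_subset _ _) (Finset.filter_subset _ _)
          · intro k _ _
            exact mul_nonneg hΛfar0 (hG0 k)
      _ = Λfar * ∑ k ∈ A, (∏ i, 1/|(k i:ℝ)+1/2|^p) := by rw [← Finset.mul_sum]
      _ ≤ Λfar * S^3 := by
          apply mul_le_mul_of_nonneg_left _ hΛfar0
          rw [hA_def]
          exact sum_prod_le (fun j => by positivity) (sum_g_le_tsum hp1)
  -- numeric bound for the mid constant
  have hE : κ/4 + a*(-((5:ℝ)/2)) + a*((3:ℝ)/2) + q*(1/2+s) + e/2 ≤ 3*κ/4 + ε := by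
    rw [ha_def, hq_def, hδ_def, hs_def, hβ_def]
    have h1 : (2-3*κ)*e ≤ 1*e :=
      mul_le_mul_of_nonneg_right (by linarith only [hκ1]) he0.le
    have h2 : e*e ≤ 1*e := mul_le_mul_of_nonneg_right he1 he0.le
    linarith only [h1, h2, heε, he0, he1]
  have hmidnum : Λmid * S^3 ≤ Kmid * N^(3*κ/4 + ε) := by
    rw [hΛmid_def, hKmid_def, ht_def, hR_def]
    exact midnum C S e κ a q s ε N hC hS0 hN1 he0 hE
  have hEfar : 1 + (b-a)*(m:ℝ) + a*((3:ℝ)/2) + q*((3:ℝ)+s-(m:ℝ)) ≤ 0 := by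
    rw [hba, hq_def, hδ_def, hs_def, hβ_def]
    have h3 : (2-3*κ)*e ≤ 1*e :=
      mul_le_mul_of_nonneg_right (by linarith only [hκ1]) he0.le
    have h4 : e*e ≤ 1*e := mul_le_mul_of_nonneg_right he1 he0.le
    have ham : a*((3:ℝ)/2) ≤ 0 :=
      mul_nonpos_iff.mpr (Or.inr ⟨ha_neg.le, by norm_num⟩)
    linarith only [h3, h4, hmR, hκ1, he1, ham]
  have hfarnum : Λfar * S^3 ≤ Kfar * N^(3*κ/4 + ε) := by
    rw [hΛfar_def, hKfar_def, ht_def, hR_def, hL_def]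
    exact farnum D S κ a b q s ε N m hD0 hS0 hN1 hEfar (by linarith only [hκ1, hε])
  -- conclusion
  have hNpow1 : (1:ℝ) ≤ N^(3*κ/4 + ε) := by
    have h0 : (0:ℝ) ≤ 3*κ/4 + ε := by linarith only [hκ1, hε]
    have := Real.rpow_le_rpow_of_exponent_le hN1 h0
    rwa [Real.rpow_zero] at this
  have hNmono : N^(3*κ/4) ≤ N^(3*κ/4 + ε) :=
    Real.rpow_le_rpow_of_exponent_le hN1 (by linarith only [hε])
  calc ∑ u : {k : Fin 3 → ℤ // latPt t k ∈ unitBox}, F u.1 ≤ ∑ k ∈ A, F k := hsum1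
    _ = _ := hsplit
    _ ≤ 343 * (C * N^(3*κ/4)) + (Λmid * S^3 + Λfar * S^3) :=
        add_le_add hnear (add_le_add hmid hfar)
    _ ≤ 343 * C * N^(3*κ/4+ε) + (Kmid * N^(3*κ/4 + ε) + Kfar * N^(3*κ/4 + ε)) := by
        have h1 : 343 * (C * N^(3*κ/4)) ≤ 343 * C * N^(3*κ/4+ε) := by
          rw [mul_assoc]
          apply mul_le_mul_of_nonneg_left _ (by norm_num)
          exact mul_le_mul_of_nonneg_left hNmono hC.le
        linarith only [h1, hmidnum, hfarnum]
    _ ≤ (343*C + Kmid + Kfar + 1) * N^(3*κ/4 + ε) := by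
        have expand : (343*C + Kmid + Kfar + 1) * N^(3*κ/4+ε)
            = 343*C*N^(3*κ/4+ε) + (Kmid*N^(3*κ/4+ε) + Kfar*N^(3*κ/4+ε)) + N^(3*κ/4+ε) := by
          ring
        linarith only [expand, hNpow1]
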